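/- Let X be a locally compact, second countable Hausdorff space and S a countable discrete semigroup with identity acting on X from the right by continuous maps. Then the transformation semigroupoid X ⋊ S is uniform Reiter if and only if the following holds: for every ε > 0, every finite set F ⊆ S and every compact set C ⊆ X, there exists a continuous family θ = (θ^x)_{x∈X} of probability measures on S such that ‖θ^x − s θ^{x.s}‖_{ℓ¹} < ε for all s ∈ F and x ∈ C, and such that ⋃_{x∈X} supp(θ^x) is a finite subset of S. -/

import Mathlib

open Filter Topology

section TransformationSemigroupoid

variable {X : Type*} {S : Type*}

/-- `θ` is a probability measure on the discrete space `S`. -/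
def IsProbFn [Monoid S] (θ : S → ℝ) : Prop := (∀ s, 0 ≤ θ s) ∧ HasSum θ 1

/-- The ℓ¹-distance between two summable functions on `S`. -/
noncomputable def dist1 [Monoid S] (θ₁ θ₂ : S → ℝ) : ℝ := ∑' u : S, |θ₁ u - θ₂ u|

/-- The pushforward `s • θ` of `θ` under left translation `t ↦ s * t`. -/
noncomputable def pushf [Monoid S] [DecidableEq S] (s : S) (θ : S → ℝ) : S → ℝ :=
  fun u => ∑' t : S, if s * t = u then θ t else 0

/-- A family `(θ^x)_{x ∈ X}` is continuous if `x ↦ θ^x` is continuous into `ℓ¹(S)`. -/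
def L1Cont [Monoid S] [TopologicalSpace X] (θ : X → S → ℝ) : Prop :=
  ∀ x₀ : X, Tendsto (fun x => ∑' s : S, |θ x s - θ x₀ s|) (𝓝 x₀) (𝓝 0)

/-- The transformation semigroupoid `X ⋊ S` of a right action `act` of `S` on `X`
(with the counting-measure quasi-Haar system) is **uniform Reiter** if there is a
sequence of continuous families of probability measures on `S` which is asymptotically
invariant, uniformly on compact subsets of `X` and finite subsets of `S`. -/
def UniformReiter [Monoid S] [DecidableEq S] [TopologicalSpace X]
    (act : X → S → X) : Prop :=
  ∃ θ : ℕ → X → S → ℝ,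
    (∀ n x, IsProbFn (θ n x)) ∧ (∀ n, L1Cont (θ n)) ∧
    ∀ C : Set X, IsCompact C → ∀ F : Finset S, ∀ ε : ℝ, 0 < ε →
      ∃ N : ℕ, ∀ n ≥ N, ∀ x ∈ C, ∀ s ∈ F,
        dist1 (θ n x) (pushf s (θ n (act x s))) < ε

end TransformationSemigroupoid

section Aux
variable {S : Type*} [Monoid S] [DecidableEq S]

lemma summable_fiber {θ : S → ℝ} (h : Summable θ) (s u : S) :
    Summable (fun t => if s * t = u then θ t else 0) :=
  Summable.of_norm_bounded h.abs fun t => by split <;> simp [abs_nonneg]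

lemma hasSum_pushf {θ : S → ℝ} {a : ℝ} (h : HasSum θ a) (s : S) :
    HasSum (pushf s θ) a := by
  have hinj : Function.Injective (fun t : S => ((s * t, t) : S × S)) :=
    fun a b hab => congrArg Prod.snd hab
  have hg : HasSum (fun p : S × S => if s * p.2 = p.1 then θ p.2 else 0) a := by
    rw [← hinj.hasSum_iff (f := fun p : S × S => if s * p.2 = p.1 then θ p.2 else 0)]
    · convert h using 1
      funext t; simp
    · rintro ⟨u, t⟩ hp
      by_contra h0
      have : s * t = u := by by_contra h1; exact h0 (if_neg h1)
      exact hp ⟨t, by simp [this]⟩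
  exact hg.prod_fiberwise fun u => (summable_fiber h.summable s u).hasSum

lemma summable_absSub {f g : S → ℝ} (hf : Summable f) (hg : Summable g) :
    Summable fun u => |f u - g u| := (hf.sub hg).abs

lemma dist1_comm (f g : S → ℝ) : dist1 f g = dist1 g f := by
  unfold dist1; exact tsum_congr fun u => abs_sub_comm _ _

lemma dist1_triangle {f g h : S → ℝ} (hf : Summable f) (hg : Summable g) (hh : Summable h) :
    dist1 f h ≤ dist1 f g + dist1 g h := by
  unfold dist1
  rw [← Summable.tsum_add (summable_absSub hf hg) (summable_absSub hg hh)]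
  exact Summable.tsum_le_tsum (fun u => abs_sub_le _ _ _) (summable_absSub hf hh)
    ((summable_absSub hf hg).add (summable_absSub hg hh))

lemma pushf_sub {θ₁ θ₂ : S → ℝ} (h₁ : Summable θ₁) (h₂ : Summable θ₂) (s u : S) :
    pushf s θ₁ u - pushf s θ₂ u = ∑' t, if s * t = u then θ₁ t - θ₂ t else 0 := by
  unfold pushf
  rw [← Summable.tsum_sub (summable_fiber h₁ s u) (summable_fiber h₂ s u)]
  exact tsum_congr fun t => by split <;> simp

lemma dist1_pushf_le {θ₁ θ₂ : S → ℝ} (h₁ : Summable θ₁) (h₂ : Summable θ₂) (s : S) :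
    dist1 (pushf s θ₁) (pushf s θ₂) ≤ dist1 θ₁ θ₂ := by
  set D : S → ℝ := fun t => |θ₁ t - θ₂ t| with hD
  have hDs : Summable D := summable_absSub h₁ h₂
  have hpt : ∀ u, |pushf s θ₁ u - pushf s θ₂ u| ≤ pushf s D u := by
    intro u
    rw [pushf_sub h₁ h₂ s u]
    have hsum1 : Summable (fun t => ‖if s * t = u then θ₁ t - θ₂ t else 0‖) := by
      refine Summable.of_nonneg_of_le (fun _ => norm_nonneg _) (fun t => ?_)
        (summable_fiber hDs s u)
      split <;> simp [hD]
    calc |∑' t, if s * t = u then θ₁ t - θ₂ t else 0|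
        = ‖∑' t, if s * t = u then θ₁ t - θ₂ t else 0‖ := (Real.norm_eq_abs _).symm
      _ ≤ ∑' t, ‖if s * t = u then θ₁ t - θ₂ t else 0‖ := norm_tsum_le_tsum_norm hsum1
      _ = pushf s D u := tsum_congr fun t => by split <;> simp [hD]
  have hsum2 : Summable (pushf s D) := (hasSum_pushf hDs.hasSum s).summable
  have hsum : Summable (fun u => |pushf s θ₁ u - pushf s θ₂ u|) :=
    Summable.of_nonneg_of_le (fun _ => abs_nonneg _) hpt hsum2
  calc dist1 (pushf s θ₁) (pushf s θ₂) ≤ ∑' u, pushf s D u := Summable.tsum_le_tsum hpt hsum hsum2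
    _ = ∑' t, D t := (hasSum_pushf hDs.hasSum s).tsum_eq
    _ = dist1 θ₁ θ₂ := rfl

end Aux

section Aux2
variable {S : Type*} [Monoid S] [DecidableEq S]

noncomputable def trunc (E : Finset S) (θ : S → ℝ) : S → ℝ :=
  fun u => if u ∈ E.erase 1 then θ u else if u = 1 then 1 - ∑ t ∈ E.erase 1, θ t else 0

lemma trunc_apply_one (E : Finset S) (θ : S → ℝ) :
    trunc E θ 1 = 1 - ∑ t ∈ E.erase 1, θ t := by
  unfold trunc; rw [if_neg (Finset.notMem_erase 1 E), if_pos rfl]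

lemma trunc_apply_mem {E : Finset S} {θ : S → ℝ} {u : S} (hu : u ∈ E.erase 1) :
    trunc E θ u = θ u := by unfold trunc; rw [if_pos hu]

lemma trunc_eq_zero {E : Finset S} {θ : S → ℝ} {u : S}
    (hu : u ∉ insert 1 (E.erase 1)) : trunc E θ u = 0 := by
  rw [Finset.mem_insert] at hu
  push_neg at hu
  unfold trunc; rw [if_neg hu.2, if_neg hu.1]

lemma isProbFn_trunc {θ : S → ℝ} (hθ : IsProbFn θ) (E : Finset S) :
    IsProbFn (trunc E θ) := by
  have hle : ∑ t ∈ E.erase 1, θ t ≤ 1 := by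
    have := Summable.sum_le_tsum (E.erase 1) (fun t _ => hθ.1 t) hθ.2.summable
    rwa [hθ.2.tsum_eq] at this
  constructor
  · intro u
    unfold trunc
    split
    · exact hθ.1 u
    · split
      · linarith
      · exact le_refl 0
  · have h0 : ∀ u ∉ insert 1 (E.erase 1), trunc E θ u = 0 := fun u hu => trunc_eq_zero hu
    have h := hasSum_sum_of_ne_finset_zero (L := SummationFilter.unconditional S) h0
    have hval : ∑ u ∈ insert 1 (E.erase 1), trunc E θ u = 1 := by
      rw [Finset.sum_insert (Finset.notMem_erase 1 E), trunc_apply_one,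
        Finset.sum_congr rfl (fun t ht => trunc_apply_mem ht)]
      ring
    rwa [hval] at h

lemma summable_trunc {θ : S → ℝ} (hθ : IsProbFn θ) (E : Finset S) :
    Summable (trunc E θ) := (isProbFn_trunc hθ E).2.summable

lemma dist1_trunc_le {θ : S → ℝ} (hθ : IsProbFn θ) (E : Finset S) :
    dist1 θ (trunc E θ) ≤ 2 * (1 - ∑ t ∈ E, θ t) := by
  classical
  set G : Finset S := insert 1 (E.erase 1) with hG
  set T : ℝ := 1 - ∑ t ∈ G, θ t with hT
  have hsumθ : Summable θ := hθ.2.summable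
  have hTnn : 0 ≤ T := by
    have := Summable.sum_le_tsum G (fun t _ => hθ.1 t) hsumθ
    rw [hθ.2.tsum_eq] at this
    rw [hT]; linarith
  have hsum : ∑ t ∈ G, θ t = θ 1 + ∑ t ∈ E.erase 1, θ t :=
    Finset.sum_insert (Finset.notMem_erase 1 E)
  have hpt : ∀ u, |θ u - trunc E θ u|
      = (if u = 1 then T else 0) + (if u ∈ G then 0 else θ u) := by
    intro u
    by_cases h1 : u = 1
    · subst h1
      rw [trunc_apply_one, if_pos rfl, if_pos (Finset.mem_insert_self _ _), add_zero]
      have heq : θ 1 - (1 - ∑ t ∈ E.erase 1, θ t) = -T := by rw [hT, hsum]; ring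
      rw [heq, abs_neg, abs_of_nonneg hTnn]
    · by_cases h2 : u ∈ E.erase 1
      · rw [trunc_apply_mem h2, if_neg h1, if_pos (Finset.mem_insert_of_mem h2)]
        simp
      · have hu : u ∉ G := by
          rw [hG, Finset.mem_insert]; push_neg; exact ⟨h1, h2⟩
        rw [trunc_eq_zero hu, if_neg h1, if_neg hu, sub_zero, zero_add,
          abs_of_nonneg (hθ.1 u)]
  have hfirst : HasSum (fun u : S => if u = 1 then T else 0) T := hasSum_ite_eq 1 T
  have hGsum : HasSum (fun u => if u ∈ G then θ u else 0) (∑ t ∈ G, θ t) := by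
    have h := hasSum_sum_of_ne_finset_zero
      (L := SummationFilter.unconditional S)
      (s := G) (f := fun u => if u ∈ G then θ u else 0) (fun u hu => if_neg hu)
    have : ∑ u ∈ G, (if u ∈ G then θ u else 0) = ∑ t ∈ G, θ t :=
      Finset.sum_congr rfl fun t ht => if_pos ht
    rwa [this] at h
  have hsecond_summ : Summable (fun u => if u ∈ G then 0 else θ u) :=
    Summable.of_nonneg_of_le (fun u => by split <;> simp [hθ.1 u])
      (fun u => by split <;> simp [hθ.1 u]) hsumθ
  have hsplit : θ = fun u => (if u ∈ G then θ u else 0) + (if u ∈ G then 0 else θ u) := by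
    funext u; by_cases h : u ∈ G <;> simp [h]
  have hsecond : HasSum (fun u => if u ∈ G then 0 else θ u) T := by
    have h2 : HasSum θ (∑ t ∈ G, θ t + ∑' u, (if u ∈ G then 0 else θ u)) := by
      have h := hGsum.add hsecond_summ.hasSum
      rwa [← hsplit] at h
    have h3 : ∑ t ∈ G, θ t + ∑' u, (if u ∈ G then 0 else θ u) = 1 := h2.unique hθ.2
    have h4 : ∑' u, (if u ∈ G then 0 else θ u) = T := by rw [hT]; linarith
    rw [← h4]; exact hsecond_summ.hasSum
  have hd : dist1 θ (trunc E θ) = T + T := by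
    unfold dist1
    rw [tsum_congr hpt]
    exact (hfirst.add hsecond).tsum_eq
  have hsub : E ⊆ G := by
    intro u hu
    by_cases h1 : u = 1
    · rw [h1]; exact Finset.mem_insert_self _ _
    · exact Finset.mem_insert_of_mem (Finset.mem_erase.mpr ⟨h1, hu⟩)
  have hEG : ∑ t ∈ E, θ t ≤ ∑ t ∈ G, θ t :=
    Finset.sum_le_sum_of_subset_of_nonneg hsub fun t _ _ => hθ.1 t
  rw [hd, hT]; linarith

end Aux2

section Aux3
variable {S : Type*} [Monoid S] [DecidableEq S] {X : Type*} [TopologicalSpace X]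

lemma tendsto_abs_sub_zero {θ : X → S → ℝ} (h : L1Cont θ) (hp : ∀ x, IsProbFn (θ x))
    (x₀ : X) (u : S) :
    Tendsto (fun x => |θ x u - θ x₀ u|) (𝓝 x₀) (𝓝 0) := by
  refine squeeze_zero (fun x => abs_nonneg _) (fun x => ?_) (h x₀)
  exact Summable.le_tsum (summable_absSub (hp x).2.summable (hp x₀).2.summable) u
    fun b _ => abs_nonneg _

lemma l1cont_trunc {θ : X → S → ℝ} (h : L1Cont θ) (hp : ∀ x, IsProbFn (θ x))
    (E : Finset S) : L1Cont (fun x => trunc E (θ x)) := by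
  intro x₀
  have key : ∀ x, ∑' u, |trunc E (θ x) u - trunc E (θ x₀) u|
      = ∑ u ∈ insert 1 (E.erase 1), |trunc E (θ x) u - trunc E (θ x₀) u| := by
    intro x
    refine tsum_eq_sum fun u hu => ?_
    rw [trunc_eq_zero hu, trunc_eq_zero hu, sub_zero, abs_zero]
  refine Tendsto.congr (fun x => (key x).symm) ?_
  have hzero : (0:ℝ) = ∑ u ∈ insert 1 (E.erase 1), (0:ℝ) := by simp
  rw [hzero]
  refine tendsto_finset_sum _ fun u hu => ?_
  rcases Finset.mem_insert.mp hu with h1 | h2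
  · subst h1
    have hb : ∀ x, |trunc E (θ x) 1 - trunc E (θ x₀) 1|
        ≤ ∑ t ∈ E.erase 1, |θ x t - θ x₀ t| := by
      intro x
      rw [trunc_apply_one, trunc_apply_one]
      have heq : (1 - ∑ t ∈ E.erase 1, θ x t) - (1 - ∑ t ∈ E.erase 1, θ x₀ t)
          = ∑ t ∈ E.erase 1, (θ x₀ t - θ x t) := by
        rw [Finset.sum_sub_distrib]; ring
      rw [heq]
      refine (Finset.abs_sum_le_sum_abs _ _).trans_eq ?_
      exact Finset.sum_congr rfl fun t _ => abs_sub_comm _ _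
    refine squeeze_zero (fun x => abs_nonneg _) hb ?_
    have := tendsto_finset_sum (E.erase 1)
      (fun t (_ : t ∈ E.erase 1) => tendsto_abs_sub_zero h hp x₀ t)
    simpa using this
  · refine Tendsto.congr (fun x => ?_) (tendsto_abs_sub_zero h hp x₀ u)
    rw [trunc_apply_mem h2, trunc_apply_mem h2]

lemma exists_tail_bound {θ : X → S → ℝ} (hp : ∀ x, IsProbFn (θ x)) (hc : L1Cont θ)
    {K : Set X} (hK : IsCompact K) {δ : ℝ} (hδ : 0 < δ) :
    ∃ E : Finset S, ∀ x ∈ K, 1 - ∑ t ∈ E, θ x t < δ := by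
  have hhalf : 0 < δ / 2 := by linarith
  have h1 : ∀ x : X, ∃ E : Finset S, 1 - δ / 2 < ∑ t ∈ E, θ x t := by
    intro x
    have ht : Tendsto (fun E : Finset S => ∑ t ∈ E, θ x t) atTop (𝓝 1) := (hp x).2
    exact (ht.eventually_const_lt (by linarith)).exists
  choose E hE using h1
  have hU : ∀ x ∈ K, {y | ∑' s, |θ y s - θ x s| < δ/2} ∈ 𝓝 x := fun x _ =>
    (hc x).eventually_lt_const hhalf
  obtain ⟨t, ht⟩ := hK.elim_nhds_subcover _ hU
  refine ⟨t.sup E, fun y hy => ?_⟩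
  obtain ⟨x, hxt, hyx⟩ := Set.mem_iUnion₂.mp (ht.2 hy)
  have hyx' : ∑' s, |θ y s - θ x s| < δ/2 := hyx
  have hsub : E x ⊆ t.sup E := Finset.le_sup hxt
  have hsum1 : ∑ s ∈ E x, θ y s ≤ ∑ s ∈ t.sup E, θ y s :=
    Finset.sum_le_sum_of_subset_of_nonneg hsub fun s _ _ => (hp y).1 s
  have hsum2 : ∑ s ∈ E x, |θ y s - θ x s| ≤ ∑' s, |θ y s - θ x s| :=
    Summable.sum_le_tsum _ (fun s _ => abs_nonneg _)
      (summable_absSub (hp y).2.summable (hp x).2.summable)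
  have hsum3 : ∑ s ∈ E x, θ x s - ∑ s ∈ E x, |θ y s - θ x s| ≤ ∑ s ∈ E x, θ y s := by
    rw [← Finset.sum_sub_distrib]
    refine Finset.sum_le_sum fun s _ => ?_
    have hle := le_abs_self (θ x s - θ y s)
    rw [abs_sub_comm] at hle
    linarith
  have hExx := hE x
  linarith

end Aux3

/-- **Characterisation of the uniform Reiter property for transformation
semigroupoids.** Let `X` be a locally compact second countable Hausdorff space and `S` a
countable discrete semigroup with identity acting on `X` from the right by continuous
maps. Then `X ⋊ S` is uniform Reiter iff for every `ε > 0`, finite `F ⊆ S` and compact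
`C ⊆ X` there is a continuous family `(θ^x)` of probability measures on `S` with
`‖θ^x - s θ^{x.s}‖_{ℓ¹} < ε` for all `s ∈ F`, `x ∈ C`, whose total support
`⋃_x supp θ^x` is finite. -/
theorem uniformReiter_iff_tight_uniform_reiter
    {X : Type*} [TopologicalSpace X] [LocallyCompactSpace X] [T2Space X]
    [SecondCountableTopology X]
    {S : Type*} [Monoid S] [Countable S] [DecidableEq S]
    (act : X → S → X)
    (hact_one : ∀ x, act x 1 = x)
    (hact_mul : ∀ x s t, act (act x s) t = act x (s * t))
    (hact_cont : ∀ s, Continuous fun x => act x s) :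
    UniformReiter act ↔
      ∀ ε : ℝ, 0 < ε → ∀ F : Finset S, ∀ C : Set X, IsCompact C →
        ∃ θ : X → S → ℝ,
          (∀ x, IsProbFn (θ x)) ∧ L1Cont θ ∧
          (∀ s ∈ F, ∀ x ∈ C, dist1 (θ x) (pushf s (θ (act x s))) < ε) ∧
          ({s : S | ∃ x : X, 0 < θ x s}).Finite := by
  constructor
  · rintro ⟨θseq, hprob, hcont, hinv⟩ ε hε F C hC
    set K : Set X := C ∪ ⋃ s ∈ F, (fun x => act x s) '' C with hK
    have hKc : IsCompact K :=
      hC.union (F.finite_toSet.isCompact_biUnion fun s _ => hC.image (hact_cont s))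
    obtain ⟨N, hN⟩ := hinv C hC F (ε/2) (by linarith)
    have hN' := hN N le_rfl
    obtain ⟨E, hE⟩ := exists_tail_bound (hprob N) (hcont N) hKc
      (show (0:ℝ) < ε/16 by linarith)
    refine ⟨fun x => trunc E (θseq N x), fun x => isProbFn_trunc (hprob N x) E,
      l1cont_trunc (hcont N) (hprob N) E, ?_, ?_⟩
    · intro s hs x hx
      have hxK : x ∈ K := Or.inl hx
      have hxsK : act x s ∈ K := Or.inr (Set.mem_biUnion hs ⟨x, hx, rfl⟩)
      have s1 : Summable (trunc E (θseq N x)) := summable_trunc (hprob N x) E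
      have s2 : Summable (θseq N x) := (hprob N x).2.summable
      have s3 : Summable (θseq N (act x s)) := (hprob N (act x s)).2.summable
      have s4 : Summable (pushf s (θseq N (act x s))) :=
        (hasSum_pushf (hprob N (act x s)).2 s).summable
      have s5 : Summable (trunc E (θseq N (act x s))) :=
        summable_trunc (hprob N (act x s)) E
      have s6 : Summable (pushf s (trunc E (θseq N (act x s)))) :=
        (hasSum_pushf (isProbFn_trunc (hprob N (act x s)) E).2 s).summable
      have tri1 : dist1 (trunc E (θseq N x)) (pushf s (trunc E (θseq N (act x s))))
          ≤ dist1 (trunc E (θseq N x)) (θseq N x)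
            + dist1 (θseq N x) (pushf s (trunc E (θseq N (act x s)))) :=
        dist1_triangle s1 s2 s6
      have tri2 : dist1 (θseq N x) (pushf s (trunc E (θseq N (act x s))))
          ≤ dist1 (θseq N x) (pushf s (θseq N (act x s)))
            + dist1 (pushf s (θseq N (act x s))) (pushf s (trunc E (θseq N (act x s)))) :=
        dist1_triangle s2 s4 s6
      have b1 : dist1 (trunc E (θseq N x)) (θseq N x) < ε/8 := by
        rw [dist1_comm]
        calc dist1 (θseq N x) (trunc E (θseq N x))
            ≤ 2 * (1 - ∑ t ∈ E, θseq N x t) := dist1_trunc_le (hprob N x) E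
          _ < 2 * (ε/16) := by have := hE x hxK; linarith
          _ = ε/8 := by ring
      have b2 : dist1 (θseq N x) (pushf s (θseq N (act x s))) < ε/2 := hN' x hx s hs
      have b3 : dist1 (pushf s (θseq N (act x s))) (pushf s (trunc E (θseq N (act x s))))
          < ε/8 := by
        refine lt_of_le_of_lt (dist1_pushf_le s3 s5 s) ?_
        calc dist1 (θseq N (act x s)) (trunc E (θseq N (act x s)))
            ≤ 2 * (1 - ∑ t ∈ E, θseq N (act x s) t) := dist1_trunc_le (hprob N (act x s)) E
          _ < 2 * (ε/16) := by have := hE _ hxsK; linarith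
          _ = ε/8 := by ring
      linarith
    · refine Set.Finite.subset (insert 1 (E.erase 1) : Finset S).finite_toSet ?_
      intro u hu
      obtain ⟨x, hx⟩ := hu
      by_contra hnot
      have hnot' : u ∉ insert 1 (E.erase 1) := by
        simp only [Finset.mem_coe] at hnot
        exact hnot
      simp only [trunc_eq_zero hnot'] at hx
      exact lt_irrefl 0 hx
  · intro h
    obtain ⟨f, hf⟩ := exists_surjective_nat S
    set K := CompactExhaustion.choice X with hKdef
    have hpos : ∀ n : ℕ, (0:ℝ) < 1 / (n + 1) := fun n => by positivity
    have hchoice : ∀ n : ℕ, ∃ θ : X → S → ℝ, (∀ x, IsProbFn (θ x)) ∧ L1Cont θ ∧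
        (∀ s ∈ (Finset.range n).image f, ∀ x ∈ K n,
          dist1 (θ x) (pushf s (θ (act x s))) < 1/(n+1)) ∧
        ({s : S | ∃ x : X, 0 < θ x s}).Finite :=
      fun n => h (1/(n+1)) (hpos n) _ (K n) (K.isCompact n)
    choose θ hprob hcont hinv hfin using hchoice
    refine ⟨θ, hprob, hcont, ?_⟩
    intro C hCc F ε hε
    obtain ⟨N₁, hN₁⟩ := K.exists_superset_of_isCompact hCc
    obtain ⟨N₃, hN₃⟩ := exists_nat_one_div_lt hε
    set g := Function.surjInv hf with hg
    refine ⟨max N₁ (max (F.sup g + 1) N₃), fun n hn x hx s hs => ?_⟩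
    have hsn : s ∈ (Finset.range n).image f := by
      refine Finset.mem_image.mpr ⟨g s, ?_, Function.surjInv_eq hf s⟩
      rw [Finset.mem_range]
      have h1 : g s ≤ F.sup g := Finset.le_sup hs
      have h2 : F.sup g + 1 ≤ n :=
        le_trans (le_trans (le_max_left _ _) (le_max_right N₁ _)) hn
      omega
    have hxn : x ∈ K n := K.subset (le_trans (le_max_left _ _) hn) (hN₁ hx)
    have hle : (1:ℝ)/(n+1) ≤ 1/(N₃+1) := by
      apply one_div_le_one_div_of_le (by positivity)
      have h3 : N₃ ≤ n :=
        le_trans (le_trans (le_max_right _ _) (le_max_right N₁ _)) hn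
      have : (N₃:ℝ) ≤ n := by exact_mod_cast h3
      linarith
    calc dist1 (θ n x) (pushf s (θ n (act x s))) < 1/(n+1) := hinv n s hsn x hxn
      _ ≤ 1/(N₃+1) := hle
      _ < ε := hN₃
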